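/- Let F be a field of characteristic 2 and let V be a finite set of vectors in (Z/2Z)^k that is linearly independent over F_2. Then in the group algebra F[(Z/2Z)^k], the product over v in V of (v + 1) equals the sum of the basis elements corresponding to all 2^|V| distinct vectors in the F_2-span of V; in particular this product is nonzero. -/

import Mathlib

theorem stmt_4 (F : Type*) [Field F] [CharP F 2] (k : ℕ)
    (V : Finset (Fin k → ZMod 2))
    (hind : LinearIndependent (ZMod 2) (fun v : {x // x ∈ V} => (v : Fin k → ZMod 2))) :
    ∏ v ∈ V, ((AddMonoidAlgebra.single v 1 + 1 : AddMonoidAlgebra F (Fin k → ZMod 2)))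
      = ∑ w ∈ (Set.toFinite ((Submodule.span (ZMod 2) (V : Set (Fin k → ZMod 2)) : Submodule (ZMod 2) (Fin k → ZMod 2)) : Set (Fin k → ZMod 2))).toFinset,
          AddMonoidAlgebra.single w (1 : F)
    ∧ (Set.toFinite ((Submodule.span (ZMod 2) (V : Set (Fin k → ZMod 2)) : Submodule (ZMod 2) (Fin k → ZMod 2)) : Set (Fin k → ZMod 2))).toFinset.card = 2 ^ V.card
    ∧ ∏ v ∈ V, ((AddMonoidAlgebra.single v 1 + 1 : AddMonoidAlgebra F (Fin k → ZMod 2))) ≠ 0 := by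
  classical
  set e : Finset (Fin k → ZMod 2) → (Fin k → ZMod 2) := fun S => ∑ v ∈ S, v with he
  set W := (Set.toFinite ((Submodule.span (ZMod 2) (V : Set (Fin k → ZMod 2)) : Submodule (ZMod 2) (Fin k → ZMod 2)) : Set (Fin k → ZMod 2))).toFinset with hW
  have hzmod : ∀ x : ZMod 2, x = 0 ∨ x = 1 := by decide
  -- injectivity of subset sums
  have hinj : ∀ S ∈ V.powerset, ∀ T ∈ V.powerset, e S = e T → S = T := by
    intro S hS T hT hST
    rw [Finset.mem_powerset] at hS hT
    have key : ∑ i ∈ V.attach,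
        (((if (i : Fin k → ZMod 2) ∈ S then 1 else 0) -
          (if (i : Fin k → ZMod 2) ∈ T then 1 else 0) : ZMod 2)) • (i : Fin k → ZMod 2) = 0 := by
      simp only [sub_smul, ite_smul, one_smul, zero_smul, Finset.sum_sub_distrib]
      rw [Finset.sum_attach V (fun v => if v ∈ S then v else 0),
          Finset.sum_attach V (fun v => if v ∈ T then v else 0),
          Finset.sum_ite_mem, Finset.sum_ite_mem,
          Finset.inter_eq_right.mpr hS, Finset.inter_eq_right.mpr hT]
      exact sub_eq_zero.mpr hST
    have hg := linearIndependent_iff'.mp hind V.attach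
      (fun i => ((if (i : Fin k → ZMod 2) ∈ S then 1 else 0) -
        (if (i : Fin k → ZMod 2) ∈ T then 1 else 0) : ZMod 2)) key
    ext v
    constructor
    · intro hv
      have hvV : v ∈ V := hS hv
      have := hg ⟨v, hvV⟩ (Finset.mem_attach _ _)
      simp only [hv, if_true, sub_eq_zero] at this
      by_contra hvT
      simp [hvT] at this
    · intro hv
      have hvV : v ∈ V := hT hv
      have := hg ⟨v, hvV⟩ (Finset.mem_attach _ _)
      simp only [hv, if_true, sub_eq_zero] at this
      by_contra hvS
      simp [hvS] at this
  -- the span finset is the image of the powerset under subset sums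
  have himg : W = V.powerset.image e := by
    ext w
    simp only [hW, Set.Finite.mem_toFinset, SetLike.mem_coe, Finset.mem_image,
      Finset.mem_powerset]
    constructor
    · intro hw
      obtain ⟨f, -, hf⟩ := Submodule.mem_span_finset.mp hw
      refine ⟨V.filter (fun v => f v = 1), Finset.filter_subset _ _, ?_⟩
      rw [he]
      simp only
      rw [Finset.sum_filter, ← hf]
      refine Finset.sum_congr rfl fun v _ => ?_
      rcases hzmod (f v) with h | h <;> simp [h]
    · rintro ⟨S, hS, rfl⟩
      exact Submodule.sum_mem _ fun v hv => Submodule.subset_span (hS hv)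
  -- expand the product
  have hprod : ∏ v ∈ V, ((AddMonoidAlgebra.single v 1 + 1 : AddMonoidAlgebra F (Fin k → ZMod 2)))
      = ∑ S ∈ V.powerset, AddMonoidAlgebra.single (e S) (1 : F) := by
    rw [Finset.prod_add]
    refine Finset.sum_congr rfl fun S _ => ?_
    rw [Finset.prod_const_one, mul_one, AddMonoidAlgebra.prod_single, Finset.prod_const_one]
  have hmain : ∏ v ∈ V, ((AddMonoidAlgebra.single v 1 + 1 : AddMonoidAlgebra F (Fin k → ZMod 2)))
      = ∑ w ∈ W, AddMonoidAlgebra.single w (1 : F) := by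
    rw [hprod, himg, Finset.sum_image hinj]
  have hcard : W.card = 2 ^ V.card := by
    rw [himg, Finset.card_image_of_injOn (fun S hS T hT => hinj S hS T hT),
      Finset.card_powerset]
  refine ⟨hmain, hcard, ?_⟩
  rw [hmain]
  intro h
  have h0 : (0 : Fin k → ZMod 2) ∈ W := by
    simp only [hW, Set.Finite.mem_toFinset, SetLike.mem_coe]
    exact Submodule.zero_mem _
  have h' : (∑ w ∈ W, Finsupp.single w (1 : F)) = (0 : (Fin k → ZMod 2) →₀ F) := by
    have := congrArg AddMonoidAlgebra.coeff h; rwa [AddMonoidAlgebra.coeff_sum] at this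
  have hy := DFunLike.congr_fun h' (0 : Fin k → ZMod 2)
  rw [Finsupp.finset_sum_apply] at hy
  simp only [Finsupp.single_apply, Finsupp.coe_zero, Pi.zero_apply] at hy
  rw [Finset.sum_ite_eq' W (0 : Fin k → ZMod 2) (fun _ => (1 : F))] at hy
  simp [h0] at hy
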